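/- Let m ≥ 1 and n ≥ 1 be integers and set P = ∏_{i=1}^m (v_i²−1) ∈ ℚ(v₁,…,v_m,t). On the elliptic curve E_n over ℚ(v₁,…,v_m,t) given by Y² = X³ + P(P−2tⁿ)X² + t^{2n}P²X, the point Q = (tⁿP, tⁿP²) is a rational point satisfying 2Q = (0,0), and Q has order exactly 4 in the group of rational points. -/

import Mathlib

/-- The field `ℚ(v₁, …, v_m, t)` of rational functions in `m + 1` variables over `ℚ`. -/
noncomputable abbrev Km (m : ℕ) : Type := FractionRing (MvPolynomial (Fin (m + 1)) ℚ)

/-- The variable `v_i` of `ℚ(v₁, …, v_m, t)`. -/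
noncomputable def vm (m : ℕ) (i : Fin m) : Km m :=
  algebraMap (MvPolynomial (Fin (m + 1)) ℚ) (Km m) (MvPolynomial.X i.castSucc)

/-- The variable `t` of `ℚ(v₁, …, v_m, t)`. -/
noncomputable def tm (m : ℕ) : Km m :=
  algebraMap (MvPolynomial (Fin (m + 1)) ℚ) (Km m) (MvPolynomial.X (Fin.last m))

/-- `P = ∏_{i=1}^m (v_i² - 1) ∈ ℚ(v₁, …, v_m, t)`. -/
noncomputable def Pm (m : ℕ) : Km m := ∏ i : Fin m, (vm m i ^ 2 - 1)

/-- `E_n`: the Weierstrass curve `Y² = X³ + P(P - 2tⁿ)X² + t^{2n}P²X` over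
`ℚ(v₁, …, v_m, t)`, where `P = ∏_{i=1}^m (v_i² - 1)`; this is the Weierstrass model of
the elliptic fibration on the variety `Z_(n)^(m+2)` birational to `Y_(n)^(m+2)`. -/
noncomputable def En (m n : ℕ) : WeierstrassCurve (Km m) :=
  ⟨0, Pm m * (Pm m - 2 * tm m ^ n), 0, tm m ^ (2 * n) * Pm m ^ 2, 0⟩

lemma tm_ne_zero (m : ℕ) : tm m ≠ 0 := by
  unfold tm
  rw [map_ne_zero_iff _ (IsFractionRing.injective _ _)]
  exact MvPolynomial.X_ne_zero _

lemma Pm_ne_zero (m : ℕ) : Pm m ≠ 0 := by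
  unfold Pm
  rw [Finset.prod_ne_zero_iff]
  intro i _
  unfold vm
  rw [← map_pow, ← map_one (algebraMap (MvPolynomial (Fin (m + 1)) ℚ) (Km m)), ← map_sub,
    map_ne_zero_iff _ (IsFractionRing.injective _ _)]
  intro h
  simpa using congrArg (MvPolynomial.eval 0) h

lemma some_eq_some {F : Type*} [Field F] {W : WeierstrassCurve.Affine F}
    {x₁ y₁ x₂ y₂ : F} (h₁ : W.Nonsingular x₁ y₁) (h₂ : W.Nonsingular x₂ y₂)
    (hx : x₁ = x₂) (hy : y₁ = y₂) :
    WeierstrassCurve.Affine.Point.some _ _ h₁ = WeierstrassCurve.Affine.Point.some _ _ h₂ := by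
  subst hx; subst hy; rfl

/-- For `m ≥ 1` and `n ≥ 1`, on the elliptic curve
`E_n : Y² = X³ + P(P - 2tⁿ)X² + t^{2n}P²X` over `ℚ(v₁, …, v_m, t)`, where
`P = ∏_{i=1}^m (v_i² - 1)`, the point `Q = (tⁿP, tⁿP²)` is a rational point satisfying
`2Q = (0, 0)`, and `Q` has order exactly `4` in the group of rational points. -/
theorem stmt15 (m n : ℕ) (hm : 1 ≤ m) (hn : 1 ≤ n) :
    ∃ (h : (En m n).toAffine.Nonsingular (tm m ^ n * Pm m) (tm m ^ n * Pm m ^ 2))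
      (h0 : (En m n).toAffine.Nonsingular 0 0),
      2 • (WeierstrassCurve.Affine.Point.some _ _ h) = WeierstrassCurve.Affine.Point.some _ _ h0 ∧
      addOrderOf (WeierstrassCurve.Affine.Point.some _ _ h) = 4 := by
  set T : Km m := tm m ^ n with hT
  have hTne : T ≠ 0 := pow_ne_zero _ (tm_ne_zero m)
  have hPne : Pm m ≠ 0 := Pm_ne_zero m
  have hTP : T * Pm m ^ 2 ≠ 0 := mul_ne_zero hTne (pow_ne_zero _ hPne)
  have ht2 : tm m ^ (2 * n) = T ^ 2 := by rw [hT, ← pow_mul, Nat.mul_comm]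
  have h : (En m n).toAffine.Nonsingular (T * Pm m) (T * Pm m ^ 2) := by
    rw [WeierstrassCurve.Affine.nonsingular_iff, WeierstrassCurve.Affine.equation_iff]
    constructor
    · show (T * Pm m ^ 2) ^ 2 + 0 * (T * Pm m) * (T * Pm m ^ 2) + 0 * (T * Pm m ^ 2)
          = (T * Pm m) ^ 3 + Pm m * (Pm m - 2 * T) * (T * Pm m) ^ 2
            + tm m ^ (2 * n) * Pm m ^ 2 * (T * Pm m) + 0
      rw [ht2]; ring
    · right
      show T * Pm m ^ 2 ≠ -(T * Pm m ^ 2) - 0 * _ - 0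
      intro hc
      apply hTP
      have : (2 : Km m) * (T * Pm m ^ 2) = 0 := by linear_combination hc
      simpa [two_ne_zero] using this
  have h0 : (En m n).toAffine.Nonsingular 0 0 := by
    rw [WeierstrassCurve.Affine.nonsingular_iff, WeierstrassCurve.Affine.equation_iff]
    constructor
    · show (0:Km m) ^ 2 + 0 * 0 * 0 + 0 * 0
          = 0 ^ 3 + Pm m * (Pm m - 2 * T) * 0 ^ 2 + tm m ^ (2 * n) * Pm m ^ 2 * 0 + 0
      ring
    · left
      show (0:Km m) * 0 ≠ 3 * 0 ^ 2 + 2 * (Pm m * (Pm m - 2 * T)) * 0 + tm m ^ (2*n) * Pm m ^ 2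
      rw [ht2]
      simpa using mul_ne_zero (pow_ne_zero 2 hTne) (pow_ne_zero 2 hPne)
  refine ⟨h, h0, ?_⟩
  have hynegY : T * Pm m ^ 2 ≠ (En m n).toAffine.negY (T * Pm m) (T * Pm m ^ 2) := by
    show T * Pm m ^ 2 ≠ -(T * Pm m ^ 2) - 0 * _ - 0
    intro hc
    apply hTP
    have : (2 : Km m) * (T * Pm m ^ 2) = 0 := by linear_combination hc
    simpa [two_ne_zero] using this
  have hslope : (En m n).toAffine.slope (T * Pm m) (T * Pm m) (T * Pm m ^ 2) (T * Pm m ^ 2)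
      = Pm m := by
    rw [WeierstrassCurve.Affine.slope_of_Y_ne rfl hynegY]
    show (3 * (T * Pm m) ^ 2 + 2 * (Pm m * (Pm m - 2 * T)) * (T * Pm m)
        + tm m ^ (2*n) * Pm m ^ 2 - 0 * _) /
      (T * Pm m ^ 2 - (-(T * Pm m ^ 2) - 0 * _ - 0)) = Pm m
    rw [ht2]
    rw [div_eq_iff]
    · ring
    · intro hc; apply hTP; linear_combination hc / 2
  have haddX : (En m n).toAffine.addX (T * Pm m) (T * Pm m)
      ((En m n).toAffine.slope (T * Pm m) (T * Pm m) (T * Pm m ^ 2) (T * Pm m ^ 2)) = 0 := by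
    rw [hslope]
    show Pm m ^ 2 + 0 * Pm m - Pm m * (Pm m - 2 * T) - T * Pm m - T * Pm m = 0
    ring
  have haddY : (En m n).toAffine.addY (T * Pm m) (T * Pm m) (T * Pm m ^ 2)
      ((En m n).toAffine.slope (T * Pm m) (T * Pm m) (T * Pm m ^ 2) (T * Pm m ^ 2)) = 0 := by
    rw [WeierstrassCurve.Affine.addY, WeierstrassCurve.Affine.negY,
      WeierstrassCurve.Affine.negAddY, haddX, hslope]
    show -(Pm m * (0 - T * Pm m) + T * Pm m ^ 2) - 0 * 0 - 0 = 0
    ring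
  have h2Q : 2 • (WeierstrassCurve.Affine.Point.some _ _ h) = WeierstrassCurve.Affine.Point.some _ _ h0 := by
    rw [two_smul, WeierstrassCurve.Affine.Point.add_self_of_Y_ne hynegY]
    exact some_eq_some _ _ haddX haddY
  refine ⟨h2Q, ?_⟩
  have h00 : (0 : Km m) = (En m n).toAffine.negY 0 0 := by
    show (0:Km m) = -0 - 0 * 0 - 0; ring
  have h4Q : (2 * 2) • (WeierstrassCurve.Affine.Point.some _ _ h) = 0 := by
    rw [mul_smul, h2Q, two_smul, WeierstrassCurve.Affine.Point.add_self_of_Y_eq h00]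
  have h2ne : 2 • (WeierstrassCurve.Affine.Point.some _ _ h) ≠ 0 := by
    rw [h2Q]
    exact fun hc => by cases hc
  haveI : Fact (Nat.Prime 2) := ⟨Nat.prime_two⟩
  have := addOrderOf_eq_prime_pow (p := 2) (n := 1)
    (x := WeierstrassCurve.Affine.Point.some _ _ h) (by simpa using h2ne) (by simpa using h4Q)
  simpa using this
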